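/- arXiv:1403.7364 — 3 statements merged into one kernel-verified Lean document; each statement's English description precedes it below -/
import Mathlib

section
/- Let (a_n) be a sequence of real numbers with a_n > -1 for all n. Then the series ∑ a_n² converges if and only if the series ∑ (a_n/(1+a_n))² converges. -/
theorem stmt_0 (a : ℕ → ℝ) (ha : ∀ n, a n > -1) :
    Summable (fun n => (a n) ^ 2) ↔ Summable (fun n => (a n / (1 + a n)) ^ 2) := by
  constructor
  · intro h
    apply summable_of_isBigO_nat h
    apply Asymptotics.IsBigO.of_bound 4
    have hev := h.tendsto_atTop_zero.eventually (gt_mem_nhds (by norm_num : (0:ℝ) < 1/4))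
    filter_upwards [hev] with n hn
    have h1 : a n > -1 := ha n
    have ht : 1 + a n > 1/2 := by nlinarith [sq_nonneg (a n + 1/2)]
    have ht0 : (1 + a n) ^ 2 > 0 := by positivity
    rw [Real.norm_eq_abs, Real.norm_eq_abs, abs_of_nonneg (by positivity),
      abs_of_nonneg (by positivity), div_pow, div_le_iff₀ ht0]
    nlinarith [mul_nonneg (sq_nonneg (a n)) (by nlinarith : (0:ℝ) ≤ 4*(1+a n)^2 - 1)]
  · intro h
    apply summable_of_isBigO_nat h
    apply Asymptotics.IsBigO.of_bound 4
    have hev := h.tendsto_atTop_zero.eventually (gt_mem_nhds (by norm_num : (0:ℝ) < 1/4))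
    filter_upwards [hev] with n hn
    have h1 : a n > -1 := ha n
    have ht : 1 + a n > 0 := by linarith
    have ht0 : (1 + a n) ^ 2 > 0 := by positivity
    rw [Real.norm_eq_abs, Real.norm_eq_abs, abs_of_nonneg (by positivity),
      abs_of_nonneg (by positivity)]
    rw [div_pow, div_lt_iff₀ ht0] at hn
    have hlt : a n < 1 := by nlinarith
    rw [div_pow, ← mul_div_assoc, le_div_iff₀ ht0]
    nlinarith [mul_nonneg (sq_nonneg (a n)) (by nlinarith : (0:ℝ) ≤ 4 - (1+a n)^2)]
end

section
/- Let (a_n) be a sequence of real numbers with a_n > -1 for all n. Then ∑ a_n² < ∞ if and only if the infinite product ∏ (1+a_n)/(1+a_n/2)² converges to a strictly positive limit. -/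
open Filter

private lemma glog_le (x : ℝ) (hx : -(1/2 : ℝ) ≤ x) :
    Real.log ((1 + x/2)^2 / (1 + x)) ≤ x^2 / 2 := by
  have h1 : 0 < 1 + x := by linarith
  have h2 : (1 + x/2)^2 / (1 + x) = 1 + x^2 / (4*(1+x)) := by
    field_simp; ring
  rw [h2]
  have h3 : Real.log (1 + x^2 / (4*(1+x))) ≤ x^2 / (4*(1+x)) := by
    have := Real.log_le_sub_one_of_pos (x := 1 + x^2 / (4*(1+x))) (by positivity)
    linarith
  have h4 : x^2 / (4*(1+x)) ≤ x^2 / 2 := by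
    apply div_le_div_of_nonneg_left (sq_nonneg x) (by norm_num) (by linarith)
  linarith

private lemma glog_ge (x : ℝ) (hx : (-1 : ℝ) < x) :
    (x / (x + 2))^2 ≤ Real.log ((1 + x/2)^2 / (1 + x)) := by
  have h1 : 0 < 1 + x := by linarith
  have h2 : 0 < 1 + x/2 := by linarith
  have hy : 0 < (1 + x/2)^2 / (1 + x) := by positivity
  have h3 := Real.log_le_sub_one_of_pos (x := ((1 + x/2)^2 / (1 + x))⁻¹) (by positivity)
  rw [Real.log_inv] at h3
  have hx2 : x + 2 ≠ 0 := by linarith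
  have h12 : (1 + x/2) ≠ 0 := ne_of_gt h2
  have hp2 : ((x+2):ℝ)^2 ≠ 0 := pow_ne_zero 2 hx2
  have heq : 1 - ((1 + x/2)^2 / (1 + x))⁻¹ = (x / (x + 2))^2 := by
    have e1 : (1 + x/2)^2 = (x+2)^2/4 := by ring
    rw [inv_div, e1, div_pow, div_div_eq_mul_div, eq_div_iff hp2, sub_mul,
      div_mul_cancel₀ _ hp2]
    ring
  linarith [heq ▸ (by linarith : 1 - ((1 + x/2)^2 / (1 + x))⁻¹ ≤ Real.log ((1 + x/2)^2 / (1 + x)))]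

theorem stmt_1 (a : ℕ → ℝ) (ha : ∀ n, a n > -1) :
    Summable (fun n => (a n) ^ 2) ↔
      ∃ L : ℝ, 0 < L ∧
        Tendsto (fun N => ∏ n ∈ Finset.range N, (1 + a n) / (1 + a n / 2) ^ 2)
          atTop (nhds L) := by
  set f : ℕ → ℝ := fun n => (1 + a n) / (1 + a n / 2) ^ 2 with hf_def
  set g : ℕ → ℝ := fun n => Real.log ((1 + a n / 2) ^ 2 / (1 + a n)) with hg_def
  have h1 : ∀ n, (0:ℝ) < 1 + a n := fun n => by linarith [ha n]
  have h2 : ∀ n, (0:ℝ) < 1 + a n / 2 := fun n => by linarith [ha n]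
  have hf_pos : ∀ n, 0 < f n := fun n => div_pos (h1 n) (pow_pos (h2 n) 2)
  have hg_nonneg : ∀ n, 0 ≤ g n := fun n => by
    have := glog_ge (a n) (ha n)
    nlinarith [sq_nonneg (a n / (a n + 2))]
  have hlog : ∀ n, Real.log (f n) = - g n := by
    intro n
    have : f n = ((1 + a n / 2) ^ 2 / (1 + a n))⁻¹ := by
      rw [inv_div]
    rw [this, Real.log_inv]
  have hprod : ∀ N, ∏ n ∈ Finset.range N, f n
      = Real.exp (-(∑ n ∈ Finset.range N, g n)) := by
    intro N
    rw [← Finset.sum_neg_distrib]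
    rw [Real.exp_sum]
    apply Finset.prod_congr rfl
    intro n _
    rw [← hlog n, Real.exp_log (hf_pos n)]
  -- key equivalence: Summable g
  have key1 : Summable g → ∃ L : ℝ, 0 < L ∧
      Tendsto (fun N => ∏ n ∈ Finset.range N, f n) atTop (nhds L) := by
    intro hg
    refine ⟨Real.exp (-(∑' n, g n)), Real.exp_pos _, ?_⟩
    have h := hg.hasSum.tendsto_sum_nat
    have : Tendsto (fun N => Real.exp (-(∑ n ∈ Finset.range N, g n))) atTop
        (nhds (Real.exp (-(∑' n, g n)))) :=
      (Real.continuous_exp.tendsto _).comp (h.neg)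
    simpa only [hprod] using this
  have key2 : (∃ L : ℝ, 0 < L ∧
      Tendsto (fun N => ∏ n ∈ Finset.range N, f n) atTop (nhds L)) → Summable g := by
    rintro ⟨L, hL, hT⟩
    have hlogT : Tendsto (fun N => Real.log (∏ n ∈ Finset.range N, f n)) atTop
        (nhds (Real.log L)) :=
      ((Real.continuousAt_log (ne_of_gt hL)).tendsto).comp hT
    have hsum_eq : ∀ N, Real.log (∏ n ∈ Finset.range N, f n)
        = -(∑ n ∈ Finset.range N, g n) := by
      intro N
      rw [hprod N, Real.log_exp]
    have hST : Tendsto (fun N => ∑ n ∈ Finset.range N, g n) atTop (nhds (-Real.log L)) := by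
      have := hlogT.neg
      simp only [hsum_eq, neg_neg] at this
      exact this
    have hmono : Monotone (fun N => ∑ n ∈ Finset.range N, g n) := by
      intro m k hmk
      exact Finset.sum_le_sum_of_subset_of_nonneg (Finset.range_subset_range.mpr hmk)
        (fun i _ _ => hg_nonneg i)
    apply summable_of_sum_range_le hg_nonneg
    intro N
    exact hmono.ge_of_tendsto hST N
  have keyA : Summable (fun n => (a n)^2) → Summable g := by
    intro hs
    have h0 : Tendsto (fun n => (a n)^2) atTop (nhds 0) := hs.tendsto_atTop_zero
    have hev : ∀ᶠ n in atTop, g n ≤ (a n)^2 := by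
      filter_upwards [h0.eventually (gt_mem_nhds (by norm_num : (0:ℝ) < 1/4))] with n hn
      have hx : -(1/2 : ℝ) ≤ a n := by nlinarith
      have := glog_le (a n) hx
      nlinarith [sq_nonneg (a n)]
    obtain ⟨N₀, hN₀⟩ := eventually_atTop.mp hev
    rw [← summable_nat_add_iff N₀]
    exact Summable.of_nonneg_of_le (fun n => hg_nonneg _)
      (fun n => hN₀ (n + N₀) (Nat.le_add_left _ _))
      ((summable_nat_add_iff N₀).mpr hs)
  have keyB : Summable g → Summable (fun n => (a n)^2) := by
    intro hg
    have h0 : Tendsto g atTop (nhds 0) := hg.tendsto_atTop_zero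
    have hev : ∀ᶠ n in atTop, (a n)^2 ≤ 9 * g n := by
      filter_upwards [h0.eventually (gt_mem_nhds (by norm_num : (0:ℝ) < 1/9))] with n hn
      have hge := glog_ge (a n) (ha n)
      have hle1 : a n ≤ 1 := by
        by_contra hgt
        push_neg at hgt
        have ht : (1:ℝ)/3 ≤ a n / (a n + 2) := by
          rw [le_div_iff₀ (by linarith)]
          linarith
        nlinarith
      have h9 : (a n + 2)^2 ≤ 9 := by nlinarith [ha n]
      have hpos : (0:ℝ) < a n + 2 := by linarith [ha n]
      have : (a n)^2 = (a n / (a n + 2))^2 * (a n + 2)^2 := by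
        field_simp
      nlinarith [sq_nonneg (a n / (a n + 2)), sq_nonneg (a n + 2), hg_nonneg n]
    obtain ⟨N₀, hN₀⟩ := eventually_atTop.mp hev
    rw [← summable_nat_add_iff N₀]
    exact Summable.of_nonneg_of_le (fun n => sq_nonneg _)
      (fun n => hN₀ (n + N₀) (Nat.le_add_left _ _))
      (((summable_nat_add_iff N₀).mpr hg).mul_left 9)
  constructor
  · intro hs
    exact key1 (keyA hs)
  · intro hL
    exact keyB (key2 hL)
end

section
/- Let d ≥ 1, 0 < α < 2∧d and β > α with 2α - β < α. Then sup over x, w in the unit ball B of ∫_B∫_B |x-y|^{α-d}·|z-w|^{α-d}·|y-z|^{β-2α} dz dy is finite. -/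
open MeasureTheory Metric
open scoped ENNReal NNReal

lemma aux_rpow_mul_rpow_le {r s a b : ℝ} (hr : 0 ≤ r) (hs : 0 ≤ s) (ha : a ≤ 0) (hb : b ≤ 0) :
    r ^ a * s ^ b ≤ r ^ (a + b) + s ^ (a + b) := by
  rcases hr.eq_or_lt with h0 | hrp
  · rcases ha.eq_or_lt with rfl | ha'
    · simp only [Real.rpow_zero, zero_add, one_mul]
      exact le_add_of_nonneg_left (Real.rpow_nonneg hr _)
    · rw [← h0, Real.zero_rpow ha'.ne, zero_mul]
      positivity
  · rcases hs.eq_or_lt with h0 | hsp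
    · rcases hb.eq_or_lt with rfl | hb'
      · simp only [Real.rpow_zero, add_zero, mul_one]
        exact le_add_of_nonneg_right (Real.rpow_nonneg hs _)
      · rw [← h0, Real.zero_rpow hb'.ne, mul_zero]
        positivity
    · rcases le_total r s with h | h
      · calc r ^ a * s ^ b ≤ r ^ a * r ^ b :=
              mul_le_mul_of_nonneg_left (Real.rpow_le_rpow_of_nonpos hrp h hb)
                (Real.rpow_nonneg hrp.le _)
          _ = r ^ (a + b) := (Real.rpow_add hrp a b).symm
          _ ≤ _ := le_add_of_nonneg_right (Real.rpow_nonneg hsp.le _)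
      · calc r ^ a * s ^ b ≤ s ^ a * s ^ b :=
              mul_le_mul_of_nonneg_right (Real.rpow_le_rpow_of_nonpos hsp h ha)
                (Real.rpow_nonneg hsp.le _)
          _ = s ^ (a + b) := (Real.rpow_add hsp a b).symm
          _ ≤ _ := le_add_of_nonneg_left (Real.rpow_nonneg hrp.le _)

lemma aux_rpow_le_two_rpow (c : ℝ) {t : ℝ} (ht : 0 ≤ t) (ht2 : t ≤ 2) :
    t ^ c ≤ 2 ^ (c - min c 0) * t ^ (min c 0) := by
  rcases ht.eq_or_lt with h0 | htp
  · rcases lt_trichotomy c 0 with hc | rfl | hc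
    · rw [min_eq_left hc.le, sub_self, Real.rpow_zero, one_mul]
    · simp
    · rw [← h0, Real.zero_rpow hc.ne']
      positivity
  · have h1 : t ^ c = t ^ (c - min c 0) * t ^ (min c 0) := by
      rw [← Real.rpow_add htp, sub_add_cancel]
    rw [h1]
    have h2 : t ^ (c - min c 0) ≤ 2 ^ (c - min c 0) :=
      Real.rpow_le_rpow ht ht2 (by simp [sub_nonneg, min_le_left])
    exact mul_le_mul_of_nonneg_right h2 (Real.rpow_nonneg ht _)

lemma aux_finite_int (d : ℕ) (hd : 1 ≤ d) {e : ℝ} (he : -(d : ℝ) < e) (he0 : e ≤ 0) :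
    ∫⁻ u in ball (0 : EuclideanSpace ℝ (Fin d)) 2, ENNReal.ofReal (‖u‖ ^ e) < ⊤ := by
  classical
  haveI : Nonempty (Fin d) := ⟨⟨0, hd⟩⟩
  set E := EuclideanSpace ℝ (Fin d)
  set a : ℕ → ℝ := fun n => (1 / 2 : ℝ) ^ n with ha
  have hapos : ∀ n, 0 < a n := fun n => pow_pos (by norm_num) n
  set S : ℕ → Set E := fun n => ball (0 : E) (2 * a n) \ ball 0 (a n) with hS
  have hcover : ball (0 : E) 2 ⊆ {0} ∪ ⋃ n, S n := by
    intro u hu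
    rcases eq_or_ne u 0 with rfl | hu0
    · exact Or.inl rfl
    right
    have hupos : 0 < ‖u‖ := norm_pos_iff.2 hu0
    have hex : ∃ n, a n ≤ ‖u‖ := by
      obtain ⟨n, hn⟩ := exists_pow_lt_of_lt_one hupos (by norm_num : (1 / 2 : ℝ) < 1)
      exact ⟨n, hn.le⟩
    refine Set.mem_iUnion.2 ⟨Nat.find hex, ?_, ?_⟩
    · rw [mem_ball_zero_iff]
      rcases Nat.eq_zero_or_pos (Nat.find hex) with hn0 | hn1
      · have ha0 : a (Nat.find hex) = 1 := by rw [hn0]; simp [ha]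
        rw [ha0, mul_one]
        exact mem_ball_zero_iff.1 hu
      · obtain ⟨m, hm⟩ := Nat.exists_eq_succ_of_ne_zero hn1.ne'
        have hlt : ‖u‖ < a m := lt_of_not_ge (Nat.find_min hex (by omega))
        have : a m = 2 * a (Nat.find hex) := by
          rw [hm, ha]
          simp [pow_succ]
          ring
        linarith
    · rw [mem_ball_zero_iff, not_lt]
      exact Nat.find_spec hex
  have hVfin : volume (ball (0 : E) 1) < ⊤ := measure_ball_lt_top
  set ρ : ℝ := (1 / 2 : ℝ) ^ (e + (d : ℝ)) with hρ
  have hρ0 : 0 ≤ ρ := Real.rpow_nonneg (by norm_num) _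
  have hρ1 : ρ < 1 := Real.rpow_lt_one (by norm_num) (by norm_num) (by linarith)
  have key : ∀ n, (∫⁻ u in S n, ENNReal.ofReal (‖u‖ ^ e)) ≤
      (ENNReal.ofReal ((2 : ℝ) ^ d) * volume (ball (0 : E) 1)) * (ENNReal.ofReal ρ) ^ n := by
    intro n
    have h1 : (∫⁻ u in S n, ENNReal.ofReal (‖u‖ ^ e)) ≤
        ∫⁻ _ in S n, ENNReal.ofReal ((a n) ^ e) := by
      refine setLIntegral_mono' (measurableSet_ball.diff measurableSet_ball) fun u hu => ?_
      have hle : a n ≤ ‖u‖ := by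
        have := hu.2
        rw [mem_ball_zero_iff, not_lt] at this
        exact this
      exact ENNReal.ofReal_le_ofReal (Real.rpow_le_rpow_of_nonpos (hapos n) hle he0)
    rw [setLIntegral_const] at h1
    have h2 : volume (S n) ≤ ENNReal.ofReal ((2 * a n) ^ d) * volume (ball (0 : E) 1) := by
      calc volume (S n) ≤ volume (ball (0 : E) (2 * a n)) := measure_mono Set.diff_subset
        _ = ENNReal.ofReal ((2 * a n) ^ Module.finrank ℝ E) * volume (ball 0 1) :=
            Measure.addHaar_ball volume _ (by positivity)
        _ = _ := by rw [show Module.finrank ℝ E = d from finrank_euclideanSpace_fin]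
    have harith : (a n) ^ e * (2 * a n) ^ d = (2 : ℝ) ^ d * ρ ^ n := by
      have hand : (a n : ℝ) ^ (d : ℝ) = (a n) ^ d := Real.rpow_natCast _ _
      have hsum : (a n) ^ e * (a n) ^ (d : ℝ) = ρ ^ n := by
        rw [← Real.rpow_add (hapos n)]
        simp only [ha, hρ]
        rw [← Real.rpow_natCast ((1 / 2 : ℝ)) n, ← Real.rpow_mul (by norm_num),
          mul_comm ((n : ℝ)), Real.rpow_mul (by norm_num), Real.rpow_natCast]
      calc (a n) ^ e * (2 * a n) ^ d = (2 : ℝ) ^ d * ((a n) ^ e * (a n) ^ d) := by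
            rw [mul_pow]; ring
        _ = (2 : ℝ) ^ d * ρ ^ n := by rw [← hand, hsum]
    calc (∫⁻ u in S n, ENNReal.ofReal (‖u‖ ^ e))
        ≤ ENNReal.ofReal ((a n) ^ e) * (ENNReal.ofReal ((2 * a n) ^ d) *
            volume (ball (0 : E) 1)) := h1.trans (mul_le_mul_right h2 _)
      _ = ENNReal.ofReal ((a n) ^ e * (2 * a n) ^ d) * volume (ball (0 : E) 1) := by
          rw [← mul_assoc, ← ENNReal.ofReal_mul (Real.rpow_nonneg (hapos n).le _)]
      _ = (ENNReal.ofReal ((2 : ℝ) ^ d) * volume (ball (0 : E) 1)) * (ENNReal.ofReal ρ) ^ n := by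
          rw [harith, ENNReal.ofReal_mul (by positivity), ← ENNReal.ofReal_pow hρ0]
          ring
  have hsum : (∫⁻ u in ball (0 : E) 2, ENNReal.ofReal (‖u‖ ^ e)) ≤
      (∫⁻ u in ({0} : Set E), ENNReal.ofReal (‖u‖ ^ e)) +
        ∑' n, ∫⁻ u in S n, ENNReal.ofReal (‖u‖ ^ e) := by
    calc (∫⁻ u in ball (0 : E) 2, ENNReal.ofReal (‖u‖ ^ e))
        ≤ ∫⁻ u in ({0} : Set E) ∪ ⋃ n, S n, ENNReal.ofReal (‖u‖ ^ e) :=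
          lintegral_mono_set hcover
      _ ≤ (∫⁻ u in ({0} : Set E), ENNReal.ofReal (‖u‖ ^ e)) +
            ∫⁻ u in ⋃ n, S n, ENNReal.ofReal (‖u‖ ^ e) := lintegral_union_le _ _ _
      _ ≤ _ := add_le_add_right (lintegral_iUnion_le _ _) _
  have hzero : (∫⁻ u in ({0} : Set E), ENNReal.ofReal (‖u‖ ^ e)) = 0 := by
    rw [Measure.restrict_eq_zero.mpr (measure_singleton _), lintegral_zero_measure]
  have htsum : (∑' n, ∫⁻ u in S n, ENNReal.ofReal (‖u‖ ^ e)) ≤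
      (ENNReal.ofReal ((2 : ℝ) ^ d) * volume (ball (0 : E) 1)) * (1 - ENNReal.ofReal ρ)⁻¹ := by
    calc (∑' n, ∫⁻ u in S n, ENNReal.ofReal (‖u‖ ^ e))
        ≤ ∑' n, (ENNReal.ofReal ((2 : ℝ) ^ d) * volume (ball (0 : E) 1)) *
            (ENNReal.ofReal ρ) ^ n := ENNReal.tsum_le_tsum key
      _ = (ENNReal.ofReal ((2 : ℝ) ^ d) * volume (ball (0 : E) 1)) *
            ∑' n, (ENNReal.ofReal ρ) ^ n := ENNReal.tsum_mul_left
      _ = _ := by rw [ENNReal.tsum_geometric]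
  have hfin : (ENNReal.ofReal ((2 : ℝ) ^ d) * volume (ball (0 : E) 1)) *
      (1 - ENNReal.ofReal ρ)⁻¹ < ⊤ := by
    apply ENNReal.mul_lt_top (ENNReal.mul_lt_top ENNReal.ofReal_lt_top hVfin)
    rw [ENNReal.inv_lt_top]
    have : ENNReal.ofReal ρ < 1 := by
      rw [← ENNReal.ofReal_one]
      exact ENNReal.ofReal_lt_ofReal_iff_of_nonneg hρ0 |>.2 hρ1
    exact tsub_pos_of_lt this
  calc (∫⁻ u in ball (0 : E) 2, ENNReal.ofReal (‖u‖ ^ e))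
      ≤ 0 + ∑' n, ∫⁻ u in S n, ENNReal.ofReal (‖u‖ ^ e) := by rw [← hzero]; exact hsum
    _ ≤ 0 + (ENNReal.ofReal ((2 : ℝ) ^ d) * volume (ball (0 : E) 1)) *
          (1 - ENNReal.ofReal ρ)⁻¹ := add_le_add_right htsum _
    _ < ⊤ := by rw [zero_add]; exact hfin

lemma aux_unif (d : ℕ) (hd : 1 ≤ d) {e : ℝ} (he : -(d : ℝ) < e) (he0 : e ≤ 0) :
    ∃ K : ℝ≥0∞, K ≠ ⊤ ∧ ∀ p ∈ ball (0 : EuclideanSpace ℝ (Fin d)) 1,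
      (∫⁻ y in ball (0 : EuclideanSpace ℝ (Fin d)) 1, ENNReal.ofReal (‖p - y‖ ^ e)) ≤ K := by
  set E := EuclideanSpace ℝ (Fin d) with hE
  refine ⟨∫⁻ u in ball (0 : E) 2, ENNReal.ofReal (‖u‖ ^ e),
    (aux_finite_int d hd he he0).ne, ?_⟩
  intro p hp
  have hmeas : Measurable fun u : E => ENNReal.ofReal (‖u‖ ^ e) :=
    (measurable_norm.pow_const e).ennreal_ofReal
  calc (∫⁻ y in ball (0 : E) 1, ENNReal.ofReal (‖p - y‖ ^ e))
      ≤ ∫⁻ y in ball (0 : E) 1,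
          (ball (0 : E) 2).indicator (fun u => ENNReal.ofReal (‖u‖ ^ e)) (p - y) := by
        refine setLIntegral_mono' measurableSet_ball fun y hy => ?_
        rw [Set.indicator_of_mem]
        rw [mem_ball_zero_iff]
        calc ‖p - y‖ ≤ ‖p‖ + ‖y‖ := norm_sub_le _ _
          _ < 1 + 1 := add_lt_add (mem_ball_zero_iff.1 hp) (mem_ball_zero_iff.1 hy)
          _ = 2 := by norm_num
    _ ≤ ∫⁻ y, (ball (0 : E) 2).indicator (fun u => ENNReal.ofReal (‖u‖ ^ e)) (p - y) :=
        setLIntegral_le_lintegral _ _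
    _ = ∫⁻ u, (ball (0 : E) 2).indicator (fun u => ENNReal.ofReal (‖u‖ ^ e)) u :=
        (Measure.measurePreserving_sub_left volume p).lintegral_comp
          (hmeas.indicator measurableSet_ball)
    _ = ∫⁻ u in ball (0 : E) 2, ENNReal.ofReal (‖u‖ ^ e) := lintegral_indicator measurableSet_ball _

theorem stmt_13 (d : ℕ) (hd : 1 ≤ d) (α β : ℝ)
    (hα0 : 0 < α) (hα2 : α < 2) (hαd : α < d) (hβ : α < β) :
    ∃ c : ℝ, 0 ≤ c ∧ ∀ x ∈ Metric.ball (0 : EuclideanSpace ℝ (Fin d)) 1,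
      ∀ w ∈ Metric.ball (0 : EuclideanSpace ℝ (Fin d)) 1,
        (∫⁻ y in Metric.ball (0 : EuclideanSpace ℝ (Fin d)) 1,
          ∫⁻ z in Metric.ball (0 : EuclideanSpace ℝ (Fin d)) 1,
            ENNReal.ofReal (‖x - y‖ ^ (α - d) * ‖z - w‖ ^ (α - d) * ‖y - z‖ ^ (β - 2 * α))
              ∂volume ∂volume)
          ≤ ENNReal.ofReal c := by
  set E := EuclideanSpace ℝ (Fin d) with hE
  set c0 : ℝ := β - 2 * α with hc0
  set γ : ℝ := min c0 0 with hγ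
  have hγ0 : γ ≤ 0 := min_le_right _ _
  have hγα : -α < γ := lt_min (by simp only [hc0]; linarith) (by linarith)
  set e : ℝ := α - d + γ with he
  have hαde : -(d : ℝ) < α - d := by linarith
  have hαd0 : α - (d : ℝ) ≤ 0 := by linarith
  have hed : -(d : ℝ) < e := by rw [he]; linarith
  have he0 : e ≤ 0 := by rw [he]; linarith
  obtain ⟨K, hKt, hKb⟩ := aux_unif d hd hed he0
  obtain ⟨K', hK't, hK'b⟩ := aux_unif d hd hαde hαd0
  set M : ℝ≥0∞ := ENNReal.ofReal ((2 : ℝ) ^ (c0 - γ)) with hM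
  have hMt : M ≠ ⊤ := ENNReal.ofReal_ne_top
  set T : ℝ≥0∞ := M * (K + K) * K' with hT
  have hTt : T ≠ ⊤ :=
    ENNReal.mul_ne_top (ENNReal.mul_ne_top hMt (ENNReal.add_ne_top.2 ⟨hKt, hKt⟩)) hK't
  refine ⟨T.toReal, ENNReal.toReal_nonneg, ?_⟩
  intro x hx w hw
  have hTle : T ≤ ENNReal.ofReal T.toReal := le_of_eq (ENNReal.ofReal_toReal hTt).symm
  refine le_trans ?_ hTle
  have step1 : ∀ y ∈ ball (0 : E) 1,
      (∫⁻ z in ball (0 : E) 1,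
        ENNReal.ofReal (‖x - y‖ ^ (α - ↑d) * ‖z - w‖ ^ (α - ↑d) * ‖y - z‖ ^ c0))
        ≤ M * ENNReal.ofReal (‖x - y‖ ^ (α - ↑d)) * (K + K) := by
    intro y hy
    set A : ℝ := ‖x - y‖ ^ (α - (d : ℝ)) with hA
    have hA0 : 0 ≤ A := Real.rpow_nonneg (norm_nonneg _) _
    have hptwise : ∀ z ∈ ball (0 : E) 1,
        ENNReal.ofReal (A * ‖z - w‖ ^ (α - ↑d) * ‖y - z‖ ^ c0) ≤
          M * ENNReal.ofReal A *
            (ENNReal.ofReal (‖z - w‖ ^ e) + ENNReal.ofReal (‖y - z‖ ^ e)) := by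
      intro z hz
      have hyz2 : ‖y - z‖ ≤ 2 := by
        calc ‖y - z‖ ≤ ‖y‖ + ‖z‖ := norm_sub_le _ _
          _ ≤ 1 + 1 := add_le_add (mem_ball_zero_iff.1 hy).le (mem_ball_zero_iff.1 hz).le
          _ = 2 := by norm_num
      have h1 : ‖y - z‖ ^ c0 ≤ 2 ^ (c0 - γ) * ‖y - z‖ ^ γ := by
        have := aux_rpow_le_two_rpow c0 (norm_nonneg (y - z)) hyz2
        rwa [← hγ] at this
      have h2 : ‖z - w‖ ^ (α - ↑d) * ‖y - z‖ ^ γ ≤ ‖z - w‖ ^ e + ‖y - z‖ ^ e := by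
        have := aux_rpow_mul_rpow_le (norm_nonneg (z - w)) (norm_nonneg (y - z)) hαd0 hγ0
        rwa [← he] at this
      have hB0 : 0 ≤ ‖z - w‖ ^ (α - (d : ℝ)) := Real.rpow_nonneg (norm_nonneg _) _
      have hreal : A * ‖z - w‖ ^ (α - ↑d) * ‖y - z‖ ^ c0 ≤
          2 ^ (c0 - γ) * (A * (‖z - w‖ ^ e + ‖y - z‖ ^ e)) := by
        calc A * ‖z - w‖ ^ (α - ↑d) * ‖y - z‖ ^ c0
            ≤ A * ‖z - w‖ ^ (α - ↑d) * (2 ^ (c0 - γ) * ‖y - z‖ ^ γ) :=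
              mul_le_mul_of_nonneg_left h1 (mul_nonneg hA0 hB0)
          _ = 2 ^ (c0 - γ) * (A * (‖z - w‖ ^ (α - ↑d) * ‖y - z‖ ^ γ)) := by ring
          _ ≤ 2 ^ (c0 - γ) * (A * (‖z - w‖ ^ e + ‖y - z‖ ^ e)) := by
              apply mul_le_mul_of_nonneg_left _ (by positivity)
              exact mul_le_mul_of_nonneg_left h2 hA0
      calc ENNReal.ofReal (A * ‖z - w‖ ^ (α - ↑d) * ‖y - z‖ ^ c0)
          ≤ ENNReal.ofReal (2 ^ (c0 - γ) * (A * (‖z - w‖ ^ e + ‖y - z‖ ^ e))) :=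
            ENNReal.ofReal_le_ofReal hreal
        _ = M * ENNReal.ofReal A *
              (ENNReal.ofReal (‖z - w‖ ^ e) + ENNReal.ofReal (‖y - z‖ ^ e)) := by
            rw [ENNReal.ofReal_mul (by positivity), ENNReal.ofReal_mul hA0,
              ENNReal.ofReal_add (Real.rpow_nonneg (norm_nonneg _) _)
                (Real.rpow_nonneg (norm_nonneg _) _), hM, mul_assoc]
    have hBmeas : Measurable fun z : E => ENNReal.ofReal (‖z - w‖ ^ e) :=
      (((measurable_id.sub measurable_const).norm).pow_const e).ennreal_ofReal
    calc (∫⁻ z in ball (0 : E) 1,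
          ENNReal.ofReal (‖x - y‖ ^ (α - ↑d) * ‖z - w‖ ^ (α - ↑d) * ‖y - z‖ ^ c0))
        ≤ ∫⁻ z in ball (0 : E) 1, M * ENNReal.ofReal A *
            (ENNReal.ofReal (‖z - w‖ ^ e) + ENNReal.ofReal (‖y - z‖ ^ e)) :=
          setLIntegral_mono' measurableSet_ball hptwise
      _ = M * ENNReal.ofReal A * ∫⁻ z in ball (0 : E) 1,
            (ENNReal.ofReal (‖z - w‖ ^ e) + ENNReal.ofReal (‖y - z‖ ^ e)) :=
          lintegral_const_mul' _ _ (ENNReal.mul_ne_top hMt ENNReal.ofReal_ne_top)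
      _ = M * ENNReal.ofReal A *
            ((∫⁻ z in ball (0 : E) 1, ENNReal.ofReal (‖z - w‖ ^ e)) +
              ∫⁻ z in ball (0 : E) 1, ENNReal.ofReal (‖y - z‖ ^ e)) := by
          rw [lintegral_add_left hBmeas]
      _ ≤ M * ENNReal.ofReal A * (K + K) := by
          apply mul_le_mul_right
          apply add_le_add
          · have heq : (∫⁻ z in ball (0 : E) 1, ENNReal.ofReal (‖z - w‖ ^ e)) =
                ∫⁻ z in ball (0 : E) 1, ENNReal.ofReal (‖w - z‖ ^ e) := by
              apply setLIntegral_congr_fun measurableSet_ball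
              intro z _
              simp only [norm_sub_rev]
            rw [heq]
            exact hKb w hw
          · exact hKb y hy
  calc (∫⁻ y in ball (0 : E) 1, ∫⁻ z in ball (0 : E) 1,
        ENNReal.ofReal (‖x - y‖ ^ (α - ↑d) * ‖z - w‖ ^ (α - ↑d) * ‖y - z‖ ^ c0))
      ≤ ∫⁻ y in ball (0 : E) 1,
          M * ENNReal.ofReal (‖x - y‖ ^ (α - ↑d)) * (K + K) :=
        setLIntegral_mono' measurableSet_ball step1
    _ = ∫⁻ y in ball (0 : E) 1,
          M * (K + K) * ENNReal.ofReal (‖x - y‖ ^ (α - ↑d)) := by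
        congr 1
        funext y
        ring
    _ = M * (K + K) * ∫⁻ y in ball (0 : E) 1, ENNReal.ofReal (‖x - y‖ ^ (α - ↑d)) :=
        lintegral_const_mul' _ _
          (ENNReal.mul_ne_top hMt (ENNReal.add_ne_top.2 ⟨hKt, hKt⟩))
    _ ≤ M * (K + K) * K' := mul_le_mul_right (hK'b x hx) _
    _ = T := rfl
end
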